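/- Let r and m be natural numbers with 1 ≤ r ≤ m. Then the group with presentation ⟨b, t | b^{2^r} = 1, t^{−1} b^{2^m} t = b⟩ is isomorphic to the infinite cyclic group ℤ. -/

import Mathlib

/-- The relators of the group `⟨b, t | b^{2^r} = 1, t⁻¹ b^{2^m} t = b⟩`,
where `true` is `b` and `false` is `t`. -/
def twoGenRels (r m : ℕ) : Set (FreeGroup Bool) :=
  {FreeGroup.of true ^ 2 ^ r,
    (FreeGroup.of false)⁻¹ * FreeGroup.of true ^ 2 ^ m * FreeGroup.of false *
      (FreeGroup.of true)⁻¹}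

theorem stmt11 (r m : ℕ) (h1 : 1 ≤ r) (h2 : r ≤ m) :
    Nonempty (PresentedGroup (twoGenRels r m) ≃* Multiplicative ℤ) := by
  set rels := twoGenRels r m
  -- the relators hold in the presented group
  have hrel1 : (PresentedGroup.of true : PresentedGroup rels) ^ 2 ^ r = 1 := by
    have : (PresentedGroup.mk rels (FreeGroup.of true ^ 2 ^ r) : PresentedGroup rels) = 1 := by
      apply (QuotientGroup.eq_one_iff _).mpr
      exact Subgroup.subset_normalClosure (Or.inl rfl)
    simp only [map_pow, map_mul, map_inv] at this
    exact this
  have hrel2 : (PresentedGroup.of false : PresentedGroup rels)⁻¹ *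
      PresentedGroup.of true ^ 2 ^ m * PresentedGroup.of false *
      (PresentedGroup.of true : PresentedGroup rels)⁻¹ = 1 := by
    have : (PresentedGroup.mk rels ((FreeGroup.of false)⁻¹ * FreeGroup.of true ^ 2 ^ m *
        FreeGroup.of false * (FreeGroup.of true)⁻¹) : PresentedGroup rels) = 1 := by
      apply (QuotientGroup.eq_one_iff _).mpr
      exact Subgroup.subset_normalClosure (Or.inr rfl)
    simp only [map_pow, map_mul, map_inv] at this
    exact this
  -- b = 1 in the presented group
  have hb2m : (PresentedGroup.of true : PresentedGroup rels) ^ 2 ^ m = 1 := by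
    have : (2 : ℕ) ^ m = 2 ^ r * 2 ^ (m - r) := by
      rw [← pow_add]; congr 1; omega
    rw [this, pow_mul, hrel1, one_pow]
  have hb : (PresentedGroup.of true : PresentedGroup rels) = 1 := by
    have := hrel2
    rw [hb2m] at this
    group at this
    -- this : of false⁻¹ * of false * of true⁻¹ = 1 or similar
    simpa using this
  -- forward homomorphism
  have hmap : ∀ w ∈ rels, FreeGroup.lift
      (fun x : Bool => if x then (1 : Multiplicative ℤ) else Multiplicative.ofAdd 1) w = 1 := by
    intro w hw
    rcases hw with h | h <;> subst h <;> simp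
  let f : PresentedGroup rels →* Multiplicative ℤ := PresentedGroup.toGroup hmap
  let g : Multiplicative ℤ →* PresentedGroup rels :=
    zpowersHom _ (PresentedGroup.of false)
  have hfg : f.comp g = MonoidHom.id _ := by
    ext
    simp [f, g, PresentedGroup.toGroup.of]
  have hgf : g.comp f = MonoidHom.id _ := by
    apply PresentedGroup.ext
    intro x
    cases x <;> simp [f, g, PresentedGroup.toGroup.of, hb]
  exact ⟨MonoidHom.toMulEquiv f g hgf hfg⟩
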